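/- Let W₁ and W₂ be closed half-spaces in ℝ³ whose boundary planes Π₁ and Π₂ are distinct and intersect in a line L, and suppose 0 lies in the interior of W₁ ∩ W₂. If the orthogonal projection of 0 onto Π₂ does not lie in the interior of W₁, then dist(0, Π₁) < dist(0, Π₂). (This is the key claim behind the paper's remark on cyclically crossed edges: if an edge of a convex polyhedron is crossed from the face F₁ to the face F₂, then the plane of F₁ is strictly closer to the reference point than the plane of F₂.) -/

import Mathlib

open scoped RealInnerProductSpace

lemma interior_halfspace_aux (n : EuclideanSpace ℝ (Fin 3)) (c : ℝ) (hn : n ≠ 0) :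
    interior {x : EuclideanSpace ℝ (Fin 3) | ⟪n, x⟫ ≤ c} = {x | ⟪n, x⟫ < c} := by
  let f : EuclideanSpace ℝ (Fin 3) →L[ℝ] ℝ := innerSL ℝ n
  have hn2 : ‖n‖ ^ 2 ≠ 0 := pow_ne_zero 2 (norm_ne_zero_iff.mpr hn)
  have hsurj : Function.Surjective f := by
    intro r
    refine ⟨(r / ‖n‖ ^ 2) • n, ?_⟩
    have h1 : f ((r / ‖n‖ ^ 2) • n) = (r / ‖n‖ ^ 2) * ⟪n, n⟫ :=
      real_inner_smul_right n n (r / ‖n‖ ^ 2)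
    rw [h1, real_inner_self_eq_norm_sq]
    field_simp
  have h2 : {x : EuclideanSpace ℝ (Fin 3) | ⟪n, x⟫ ≤ c} = f ⁻¹' Set.Iic c := rfl
  rw [h2, f.interior_preimage hsurj, interior_Iic]
  rfl

/-- if `W₁, W₂` are closed half-spaces in `ℝ³` with distinct boundary planes
`B₁, B₂` meeting in a line, `0 ∈ int (W₁ ∩ W₂)`, and the orthogonal projection `p₂` of `0`
onto `B₂` does not lie in the interior of `W₁`, then `B₁` is strictly closer to `0` than
`B₂`. -/
theorem infDist_plane_lt_of_crossed_edge
    (n₁ n₂ : EuclideanSpace ℝ (Fin 3)) (c₁ c₂ : ℝ) (hn₁ : n₁ ≠ 0) (hn₂ : n₂ ≠ 0)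
    (W₁ W₂ B₁ B₂ : Set (EuclideanSpace ℝ (Fin 3)))
    (hW₁ : W₁ = {x | ⟪n₁, x⟫ ≤ c₁}) (hW₂ : W₂ = {x | ⟪n₂, x⟫ ≤ c₂})
    (hB₁ : B₁ = {x | ⟪n₁, x⟫ = c₁}) (hB₂ : B₂ = {x | ⟪n₂, x⟫ = c₂})
    (hne : B₁ ≠ B₂) (hmeet : (B₁ ∩ B₂).Nonempty)
    (h0 : (0 : EuclideanSpace ℝ (Fin 3)) ∈ interior (W₁ ∩ W₂))
    -- `p₂` is the orthogonal projection of `0` onto `B₂`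
    (p₂ : EuclideanSpace ℝ (Fin 3)) (hp₂ : p₂ ∈ B₂)
    (hperp₂ : ∀ x ∈ B₂, ⟪(0 : EuclideanSpace ℝ (Fin 3)) - p₂, x - p₂⟫ = 0)
    (hout : p₂ ∉ interior W₁) :
    Metric.infDist 0 B₁ < Metric.infDist 0 B₂ := by
  have hN₁ : (0:ℝ) < ‖n₁‖ := norm_pos_iff.mpr hn₁
  have hN₂ : (0:ℝ) < ‖n₂‖ := norm_pos_iff.mpr hn₂
  have hn1sq : (0:ℝ) < ‖n₁‖ ^ 2 := by positivity
  have hn2sq : (0:ℝ) < ‖n₂‖ ^ 2 := by positivity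
  -- positivity of c₁, c₂
  have h0' := interior_mono (Set.inter_subset_left) h0
  have h0'' := interior_mono (Set.inter_subset_right) h0
  rw [hW₁, interior_halfspace_aux n₁ c₁ hn₁] at h0'
  rw [hW₂, interior_halfspace_aux n₂ c₂ hn₂] at h0''
  have hc₁ : 0 < c₁ := by simpa using h0'
  have hc₂ : 0 < c₂ := by simpa using h0''
  -- p₂ is a multiple of n₂
  set t : ℝ := c₂ / ‖n₂‖ ^ 2 with ht
  have htpos : 0 < t := div_pos hc₂ hn2sq
  have htn : t * ‖n₂‖ ^ 2 = c₂ := by rw [ht]; field_simp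
  have hp₂' : ⟪n₂, p₂⟫ = c₂ := by rw [hB₂] at hp₂; exact hp₂
  have hp2eq : p₂ = t • n₂ := by
    set v := p₂ - t • n₂ with hv
    have hnv : ⟪n₂, v⟫ = 0 := by
      simp only [hv, inner_sub_right, real_inner_smul_right,
        real_inner_self_eq_norm_sq, hp₂']
      linarith [htn]
    have hvmem : p₂ + v ∈ B₂ := by
      rw [hB₂]
      simp only [Set.mem_setOf_eq, inner_add_right, hp₂', hnv, add_zero]
    have h1 := hperp₂ _ hvmem
    simp only [add_sub_cancel_left, zero_sub, inner_neg_left, neg_eq_zero] at h1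
    have h3 : ⟪t • n₂, v⟫ = 0 := by rw [real_inner_smul_left, hnv, mul_zero]
    have h4 : ⟪v, v⟫ = 0 := by
      have h5 : ⟪p₂ - t • n₂, v⟫ = 0 := by rw [inner_sub_left, h1, h3, sub_zero]
      simpa [hv] using h5
    have h6 : v = 0 := inner_self_eq_zero.mp h4
    rw [hv] at h6
    exact sub_eq_zero.mp h6
  -- from hout
  have hkey : c₁ ≤ t * ⟪n₁, n₂⟫ := by
    rw [hW₁, interior_halfspace_aux n₁ c₁ hn₁] at hout
    have h7 : c₁ ≤ ⟪n₁, p₂⟫ := by simpa using not_lt.mp hout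
    rw [hp2eq, real_inner_smul_right] at h7
    exact h7
  -- strict Cauchy-Schwarz
  have hCS : ⟪n₁, n₂⟫ < ‖n₁‖ * ‖n₂‖ := by
    rcases lt_or_eq_of_le (real_inner_le_norm n₁ n₂) with h | h
    · exact h
    · exfalso
      have heq : ‖n₂‖ • n₁ = ‖n₁‖ • n₂ := inner_eq_norm_mul_iff_real.mp h
      set r : ℝ := ‖n₂‖ / ‖n₁‖ with hr
      have hrpos : 0 < r := div_pos hN₂ hN₁
      have hn₂eq : n₂ = r • n₁ := by
        have h8 := congrArg (fun z => (‖n₁‖⁻¹ : ℝ) • z) heq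
        simp only [smul_smul] at h8
        rw [inv_mul_cancel₀ hN₁.ne', one_smul] at h8
        rw [← h8, hr, div_eq_inv_mul]
      obtain ⟨x₀, hx₁, hx₂⟩ := hmeet
      rw [hB₁] at hx₁; rw [hB₂] at hx₂
      have hc : c₂ = r * c₁ := by
        rw [← hx₂, hn₂eq, real_inner_smul_left, hx₁]
      apply hne
      rw [hB₁, hB₂]
      ext x
      simp only [Set.mem_setOf_eq, hn₂eq, real_inner_smul_left, hc]
      constructor
      · intro hx; rw [hx]
      · intro hx; exact mul_left_cancel₀ hrpos.ne' hx
  -- the main inequality between the two distances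
  have hmain : c₁ / ‖n₁‖ < c₂ / ‖n₂‖ := by
    have h9 : c₁ < t * (‖n₁‖ * ‖n₂‖) :=
      lt_of_le_of_lt hkey (mul_lt_mul_of_pos_left hCS htpos)
    rw [div_lt_div_iff₀ hN₁ hN₂]
    nlinarith [mul_lt_mul_of_pos_right h9 hn2sq, hN₂, htn]
  -- upper bound for dist to B₁
  have hub : Metric.infDist 0 B₁ ≤ c₁ / ‖n₁‖ := by
    set q₁ : EuclideanSpace ℝ (Fin 3) := (c₁ / ‖n₁‖ ^ 2) • n₁ with hq
    have hq₁mem : q₁ ∈ B₁ := by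
      rw [hB₁]
      simp only [Set.mem_setOf_eq, hq, real_inner_smul_right, real_inner_self_eq_norm_sq]
      field_simp
    have h10 := Metric.infDist_le_dist_of_mem (x := (0 : EuclideanSpace ℝ (Fin 3))) hq₁mem
    rw [dist_zero_left] at h10
    have h11 : ‖q₁‖ = c₁ / ‖n₁‖ := by
      rw [hq, norm_smul, Real.norm_eq_abs, abs_of_pos (div_pos hc₁ hn1sq)]
      rw [sq]
      field_simp
    rwa [h11] at h10
  -- lower bound for dist to B₂
  have hlb : c₂ / ‖n₂‖ ≤ Metric.infDist 0 B₂ := by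
    by_contra hcon
    push_neg at hcon
    obtain ⟨y, hy, hyd⟩ := (Metric.infDist_lt_iff ⟨p₂, hp₂⟩).mp hcon
    rw [hB₂] at hy
    rw [dist_zero_left] at hyd
    have h12 : c₂ ≤ ‖n₂‖ * ‖y‖ := by
      calc c₂ = ⟪n₂, y⟫ := hy.symm
        _ ≤ ‖n₂‖ * ‖y‖ := real_inner_le_norm n₂ y
    have h13 : ‖n₂‖ * ‖y‖ < ‖n₂‖ * (c₂ / ‖n₂‖) := mul_lt_mul_of_pos_left hyd hN₂
    rw [mul_div_cancel₀ _ hN₂.ne'] at h13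
    linarith
  calc Metric.infDist 0 B₁ ≤ c₁ / ‖n₁‖ := hub
    _ < c₂ / ‖n₂‖ := hmain
    _ ≤ Metric.infDist 0 B₂ := hlb
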